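/- Let α, β, γ be non-zero complex numbers and let m, n, m', n' be integers with m ≠ n, m,n ≠ 0, m' ≠ n', m',n' ≠ 0, and (m,n) ≠ (m',n'). Consider the six expressions x₁ = α^m β^n, x₂ = α^n β^m, x₃ = α^m γ^n, x₄ = α^n γ^m, x₅ = β^m γ^n, x₆ = β^n γ^m, and the corresponding primed expressions x₁' = α^{m'} β^{n'}, x₂' = α^{n'} β^{m'}, x₃' = α^{m'} γ^{n'}, x₄' = α^{n'} γ^{m'}, x₅' = β^{m'} γ^{n'}, x₆' = β^{n'} γ^{m'}. Assume the index set {1,…,6} admits a partition into two sets T and U (one possibly empty) such that for any two indices i, j in T one has x_i/x_i' = x_j/x_j', and likewise for any two indices in U. Then one of α/β, α/γ, β/γ is a root of unity. -/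
import Mathlib


open Polynomial
open scoped Classical

/-- A complex number is a root of unity. -/
def IsRootOfUnity (z : ℂ) : Prop := ∃ N : ℕ, 0 < N ∧ z ^ N = 1

private lemma zpow_eq_one_rootOfUnity {z : ℂ} {k : ℤ} (hk : k ≠ 0) (h : z ^ k = 1) :
    IsRootOfUnity z := by
  refine ⟨k.natAbs, Int.natAbs_pos.mpr hk, ?_⟩
  rcases Int.natAbs_eq k with h1 | h1
  · rw [← zpow_natCast, ← h1, h]
  · rw [← zpow_natCast]
    have h2 : (k.natAbs : ℤ) = -k := by omega
    rw [h2, zpow_neg, h, inv_one]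

private lemma diff_eq_zero {G : Type*} [AddCommGroup G] {x y t : G} (h : x = y)
    (hid : t = x - y) : t = 0 := by rw [hid, h, sub_self]

private lemma core {G : Type*} [AddCommGroup G] (A B C : G) (a b : ℤ)
    (hab : ¬(a = 0 ∧ b = 0)) (f : Fin 6 → Prop) (w : Fin 6 → G)
    (e0 : w 0 = a•A + b•B) (e1 : w 1 = b•A + a•B) (e2 : w 2 = a•A + b•C)
    (e3 : w 3 = b•A + a•C) (e4 : w 4 = a•B + b•C) (e5 : w 5 = b•B + a•C)
    (key : ∀ i j : Fin 6, (f i ↔ f j) → w i = w j) :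
    (∃ k : ℤ, k ≠ 0 ∧ k • (A - B) = 0) ∨ (∃ k : ℤ, k ≠ 0 ∧ k • (A - C) = 0) ∨
    (∃ k : ℤ, k ≠ 0 ∧ k • (B - C) = 0) := by
  have tri : ∀ p q r : Prop, (p ↔ q) ∨ (p ↔ r) ∨ (q ↔ r) := by tauto
  by_cases ha : a = 0
  · have hb : b ≠ 0 := fun h => hab ⟨ha, h⟩
    subst ha
    rcases tri (f 0) (f 1) (f 2) with h | h | h
    · have e := key 0 1 h; rw [e0, e1] at e
      have hid : b•(A-B) = (b•A + (0:ℤ)•B) - ((0:ℤ)•A + b•B) := by module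
      exact Or.inl ⟨b, hb, diff_eq_zero e.symm hid⟩
    · have e := key 0 2 h; rw [e0, e2] at e
      have hid : b•(B-C) = ((0:ℤ)•A + b•B) - ((0:ℤ)•A + b•C) := by module
      exact Or.inr (Or.inr ⟨b, hb, diff_eq_zero e hid⟩)
    · have e := key 1 2 h; rw [e1, e2] at e
      have hid : b•(A-C) = (b•A + (0:ℤ)•B) - ((0:ℤ)•A + b•C) := by module
      exact Or.inr (Or.inl ⟨b, hb, diff_eq_zero e hid⟩)
  by_cases hb : b = 0
  · subst hb
    rcases tri (f 0) (f 1) (f 3) with h | h | h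
    · have e := key 0 1 h; rw [e0, e1] at e
      have hid : a•(A-B) = (a•A + (0:ℤ)•B) - ((0:ℤ)•A + a•B) := by module
      exact Or.inl ⟨a, ha, diff_eq_zero e hid⟩
    · have e := key 0 3 h; rw [e0, e3] at e
      have hid : a•(A-C) = (a•A + (0:ℤ)•B) - ((0:ℤ)•A + a•C) := by module
      exact Or.inr (Or.inl ⟨a, ha, diff_eq_zero e hid⟩)
    · have e := key 1 3 h; rw [e1, e3] at e
      have hid : a•(B-C) = ((0:ℤ)•A + a•B) - ((0:ℤ)•A + a•C) := by module
      exact Or.inr (Or.inr ⟨a, ha, diff_eq_zero e hid⟩)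
  rcases tri (f 0) (f 2) (f 4) with h | h | h
  · have e := key 0 2 h; rw [e0, e2] at e
    have hid : b•(B-C) = (a•A + b•B) - (a•A + b•C) := by module
    exact Or.inr (Or.inr ⟨b, hb, diff_eq_zero e hid⟩)
  · -- E04
    have h04 := key 0 4 h; rw [e0, e4] at h04
    rcases tri (f 1) (f 3) (f 5) with h' | h' | h'
    · have e := key 1 3 h'; rw [e1, e3] at e
      have hid : a•(B-C) = (b•A + a•B) - (b•A + a•C) := by module
      exact Or.inr (Or.inr ⟨a, ha, diff_eq_zero e hid⟩)
    · -- E15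
      have h15 := key 1 5 h'; rw [e1, e5] at h15
      by_cases hs : a + b = 0
      · have hb' : b = -a := by omega
        subst hb'
        rcases tri (f 0) (f 2) (f 3) with h'' | h'' | h''
        · have e := key 0 2 h''; rw [e0, e2] at e
          have hid : (-a)•(B-C) = (a•A + (-a)•B) - (a•A + (-a)•C) := by module
          exact Or.inr (Or.inr ⟨-a, neg_ne_zero.mpr ha, diff_eq_zero e hid⟩)
        · -- E03 together with E04
          have h03 := key 0 3 h''; rw [e0, e3] at h03
          have hm : ((a•A + (-a)•B) + (a•A + (-a)•B) : G)
              = ((a•B + (-a)•C) + ((-a)•A + a•C) : G) := congrArg₂ (· + ·) h04 h03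
          have hid : (3*a)•(A-B) =
              ((a•A + (-a)•B) + (a•A + (-a)•B)) - ((a•B + (-a)•C) + ((-a)•A + a•C)) := by
            module
          exact Or.inl ⟨3*a, by omega, diff_eq_zero hm hid⟩
        · have e := key 2 3 h''; rw [e2, e3] at e
          have hid : (2*a)•(A-C) = (a•A + (-a)•C) - ((-a)•A + a•C) := by module
          exact Or.inr (Or.inl ⟨2*a, by omega, diff_eq_zero e hid⟩)
      · have hm : ((a•A + b•B) + (b•A + a•B) : G) = ((a•B + b•C) + (b•B + a•C) : G) :=
          congrArg₂ (· + ·) h04 h15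
        have hid : (a+b)•(A-C) =
            ((a•A + b•B) + (b•A + a•B)) - ((a•B + b•C) + (b•B + a•C)) := by module
        exact Or.inr (Or.inl ⟨a + b, hs, diff_eq_zero hm hid⟩)
    · have e := key 3 5 h'; rw [e3, e5] at e
      have hid : b•(A-B) = (b•A + a•C) - (b•B + a•C) := by module
      exact Or.inl ⟨b, hb, diff_eq_zero e hid⟩
  · have e := key 2 4 h; rw [e2, e4] at e
    have hid : a•(A-B) = (a•A + b•C) - (a•B + b•C) := by module
    exact Or.inl ⟨a, ha, diff_eq_zero e hid⟩

private lemma ratio_aux {x y : ℂ} (hx : x ≠ 0) (hy : y ≠ 0) (p q p' q' : ℤ) :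
    x ^ p * y ^ q / (x ^ p' * y ^ q') = x ^ (p - p') * y ^ (q - q') := by
  rw [zpow_sub₀ hx, zpow_sub₀ hy, div_mul_div_comm]

/-- If the index set of the six monomial expressions admits a partition into two sets on
each of which the quotient `xᵢ / xᵢ'` is constant, then one of `α/β`, `α/γ`, `β/γ` is a
root of unity. -/
theorem rootOfUnity_of_partition_two_sets (α β γ : ℂ) (m n m' n' : ℤ)
    (hα : α ≠ 0) (hβ : β ≠ 0) (hγ : γ ≠ 0)
    (hmn : m ≠ n) (hm : m ≠ 0) (hn : n ≠ 0)
    (hmn' : m' ≠ n') (hm' : m' ≠ 0) (hn' : n' ≠ 0)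
    (hpair : (m, n) ≠ (m', n'))
    (x x' : Fin 6 → ℂ)
    (hx : x = ![α ^ m * β ^ n, α ^ n * β ^ m, α ^ m * γ ^ n, α ^ n * γ ^ m,
      β ^ m * γ ^ n, β ^ n * γ ^ m])
    (hx' : x' = ![α ^ m' * β ^ n', α ^ n' * β ^ m', α ^ m' * γ ^ n', α ^ n' * γ ^ m',
      β ^ m' * γ ^ n', β ^ n' * γ ^ m'])
    (hpart : ∃ T U : Finset (Fin 6), Disjoint T U ∧ T ∪ U = Finset.univ ∧
      (∀ i ∈ T, ∀ j ∈ T, x i / x' i = x j / x' j) ∧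
      (∀ i ∈ U, ∀ j ∈ U, x i / x' i = x j / x' j)) :
    IsRootOfUnity (α / β) ∨ IsRootOfUnity (α / γ) ∨ IsRootOfUnity (β / γ) := by
  obtain ⟨T, U, hdisj, huniv, hT, hU⟩ := hpart
  subst hx
  subst hx'
  have hab : ¬(m - m' = 0 ∧ n - n' = 0) := by
    rintro ⟨h1, h2⟩
    exact hpair (by rw [Prod.mk.injEq]; omega)
  -- the vector of unit-valued quotients
  have hval : ∀ i : Fin 6,
      ((![Units.mk0 α hα ^ (m-m') * Units.mk0 β hβ ^ (n-n'),
          Units.mk0 α hα ^ (n-n') * Units.mk0 β hβ ^ (m-m'),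
          Units.mk0 α hα ^ (m-m') * Units.mk0 γ hγ ^ (n-n'),
          Units.mk0 α hα ^ (n-n') * Units.mk0 γ hγ ^ (m-m'),
          Units.mk0 β hβ ^ (m-m') * Units.mk0 γ hγ ^ (n-n'),
          Units.mk0 β hβ ^ (n-n') * Units.mk0 γ hγ ^ (m-m')] i : ℂˣ) : ℂ) =
      ![α ^ m * β ^ n, α ^ n * β ^ m, α ^ m * γ ^ n, α ^ n * γ ^ m,
        β ^ m * γ ^ n, β ^ n * γ ^ m] i /
      ![α ^ m' * β ^ n', α ^ n' * β ^ m', α ^ m' * γ ^ n', α ^ n' * γ ^ m',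
        β ^ m' * γ ^ n', β ^ n' * γ ^ m'] i := by
    intro i
    fin_cases i
    · show ((Units.mk0 α hα ^ (m-m') * Units.mk0 β hβ ^ (n-n') : ℂˣ) : ℂ)
        = α ^ m * β ^ n / (α ^ m' * β ^ n')
      rw [Units.val_mul, Units.val_zpow_eq_zpow_val, Units.val_zpow_eq_zpow_val,
        Units.val_mk0, Units.val_mk0]
      exact (ratio_aux hα hβ m n m' n').symm
    · show ((Units.mk0 α hα ^ (n-n') * Units.mk0 β hβ ^ (m-m') : ℂˣ) : ℂ)
        = α ^ n * β ^ m / (α ^ n' * β ^ m')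
      rw [Units.val_mul, Units.val_zpow_eq_zpow_val, Units.val_zpow_eq_zpow_val,
        Units.val_mk0, Units.val_mk0]
      exact (ratio_aux hα hβ n m n' m').symm
    · show ((Units.mk0 α hα ^ (m-m') * Units.mk0 γ hγ ^ (n-n') : ℂˣ) : ℂ)
        = α ^ m * γ ^ n / (α ^ m' * γ ^ n')
      rw [Units.val_mul, Units.val_zpow_eq_zpow_val, Units.val_zpow_eq_zpow_val,
        Units.val_mk0, Units.val_mk0]
      exact (ratio_aux hα hγ m n m' n').symm
    · show ((Units.mk0 α hα ^ (n-n') * Units.mk0 γ hγ ^ (m-m') : ℂˣ) : ℂ)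
        = α ^ n * γ ^ m / (α ^ n' * γ ^ m')
      rw [Units.val_mul, Units.val_zpow_eq_zpow_val, Units.val_zpow_eq_zpow_val,
        Units.val_mk0, Units.val_mk0]
      exact (ratio_aux hα hγ n m n' m').symm
    · show ((Units.mk0 β hβ ^ (m-m') * Units.mk0 γ hγ ^ (n-n') : ℂˣ) : ℂ)
        = β ^ m * γ ^ n / (β ^ m' * γ ^ n')
      rw [Units.val_mul, Units.val_zpow_eq_zpow_val, Units.val_zpow_eq_zpow_val,
        Units.val_mk0, Units.val_mk0]
      exact (ratio_aux hβ hγ m n m' n').symm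
    · show ((Units.mk0 β hβ ^ (n-n') * Units.mk0 γ hγ ^ (m-m') : ℂˣ) : ℂ)
        = β ^ n * γ ^ m / (β ^ n' * γ ^ m')
      rw [Units.val_mul, Units.val_zpow_eq_zpow_val, Units.val_zpow_eq_zpow_val,
        Units.val_mk0, Units.val_mk0]
      exact (ratio_aux hβ hγ n m n' m').symm
  have key : ∀ i j : Fin 6, ((i ∈ T) ↔ (j ∈ T)) →
      (![Units.mk0 α hα ^ (m-m') * Units.mk0 β hβ ^ (n-n'),
        Units.mk0 α hα ^ (n-n') * Units.mk0 β hβ ^ (m-m'),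
        Units.mk0 α hα ^ (m-m') * Units.mk0 γ hγ ^ (n-n'),
        Units.mk0 α hα ^ (n-n') * Units.mk0 γ hγ ^ (m-m'),
        Units.mk0 β hβ ^ (m-m') * Units.mk0 γ hγ ^ (n-n'),
        Units.mk0 β hβ ^ (n-n') * Units.mk0 γ hγ ^ (m-m')] : Fin 6 → ℂˣ) i
      = ![Units.mk0 α hα ^ (m-m') * Units.mk0 β hβ ^ (n-n'),
        Units.mk0 α hα ^ (n-n') * Units.mk0 β hβ ^ (m-m'),
        Units.mk0 α hα ^ (m-m') * Units.mk0 γ hγ ^ (n-n'),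
        Units.mk0 α hα ^ (n-n') * Units.mk0 γ hγ ^ (m-m'),
        Units.mk0 β hβ ^ (m-m') * Units.mk0 γ hγ ^ (n-n'),
        Units.mk0 β hβ ^ (n-n') * Units.mk0 γ hγ ^ (m-m')] j := by
    intro i j hij
    apply Units.ext
    rw [hval, hval]
    by_cases hi : i ∈ T
    · exact hT i hi j (hij.mp hi)
    · have hj : j ∉ T := fun hj => hi (hij.mpr hj)
      have hiU : i ∈ U := by
        have hiu := Finset.mem_univ i
        rw [← huniv, Finset.mem_union] at hiu
        tauto
      have hjU : j ∈ U := by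
        have hju := Finset.mem_univ j
        rw [← huniv, Finset.mem_union] at hju
        tauto
      exact hU i hiU j hjU
  -- move to the additive group `Additive ℂˣ`
  have hcore := core (Additive.ofMul (Units.mk0 α hα)) (Additive.ofMul (Units.mk0 β hβ))
    (Additive.ofMul (Units.mk0 γ hγ)) (m - m') (n - n') hab (fun i => i ∈ T)
    (fun i => Additive.ofMul
      ((![Units.mk0 α hα ^ (m-m') * Units.mk0 β hβ ^ (n-n'),
        Units.mk0 α hα ^ (n-n') * Units.mk0 β hβ ^ (m-m'),
        Units.mk0 α hα ^ (m-m') * Units.mk0 γ hγ ^ (n-n'),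
        Units.mk0 α hα ^ (n-n') * Units.mk0 γ hγ ^ (m-m'),
        Units.mk0 β hβ ^ (m-m') * Units.mk0 γ hγ ^ (n-n'),
        Units.mk0 β hβ ^ (n-n') * Units.mk0 γ hγ ^ (m-m')] : Fin 6 → ℂˣ) i))
    (by rw [← ofMul_zpow, ← ofMul_zpow]; rfl)
    (by rw [← ofMul_zpow, ← ofMul_zpow]; rfl)
    (by rw [← ofMul_zpow, ← ofMul_zpow]; rfl)
    (by rw [← ofMul_zpow, ← ofMul_zpow]; rfl)
    (by rw [← ofMul_zpow, ← ofMul_zpow]; rfl)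
    (by rw [← ofMul_zpow, ← ofMul_zpow]; rfl)
    (fun i j hij => congrArg Additive.ofMul (key i j hij))
  have conv : ∀ (u v : ℂˣ) (k : ℤ),
      k • (Additive.ofMul u - Additive.ofMul v) = 0 → ((u : ℂ) / (v : ℂ)) ^ k = 1 := by
    intro u v k hk
    have h1 : Additive.ofMul ((u / v) ^ k) = Additive.ofMul (1 : ℂˣ) := by
      rw [ofMul_zpow]; exact hk
    have h2 : (u / v) ^ k = 1 := Additive.ofMul.injective h1
    have h3 := congrArg Units.val h2
    simpa [Units.val_zpow_eq_zpow_val, Units.val_div_eq_div_val] using h3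
  rcases hcore with ⟨k, hk, h⟩ | ⟨k, hk, h⟩ | ⟨k, hk, h⟩
  · exact Or.inl (zpow_eq_one_rootOfUnity hk
      (conv (Units.mk0 α hα) (Units.mk0 β hβ) k h))
  · exact Or.inr (Or.inl (zpow_eq_one_rootOfUnity hk
      (conv (Units.mk0 α hα) (Units.mk0 γ hγ) k h)))
  · exact Or.inr (Or.inr (zpow_eq_one_rootOfUnity hk
      (conv (Units.mk0 β hβ) (Units.mk0 γ hγ) k h)))
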